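/- Let E be a complex Hilbert space, z ∈ ℂ, and x, y in the open unit ball of E with max(‖x‖,‖y‖) > 0 and |z| ≤ (1 + max(‖x‖,‖y‖))/(2 max(‖x‖,‖y‖)). Then |1 - ⟨x,y⟩| ≤ 2 |1 - |z|² ⟨x,y⟩|. -/

import Mathlib

theorem stmt7 {E : Type*} [NormedAddCommGroup E] [InnerProductSpace ℂ E]
    (z : ℂ) (x y : E) (hx : ‖x‖ < 1) (hy : ‖y‖ < 1) (hmax : 0 < max ‖x‖ ‖y‖)
    (hz : ‖z‖ ≤ (1 + max ‖x‖ ‖y‖) / (2 * max ‖x‖ ‖y‖)) :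
    ‖(1 - (inner ℂ y x : ℂ))‖ ≤
      2 * ‖(1 - ((‖z‖ : ℂ))^2 * (inner ℂ y x : ℂ))‖ := by
  set w : ℂ := (inner ℂ y x : ℂ) with hw
  set r : ℝ := ‖z‖ with hrdef
  set m : ℝ := max ‖x‖ ‖y‖ with hmdef
  set W : ℝ := ‖w‖ with hWdef
  have hm0 : 0 < m := hmax
  have hm1 : m < 1 := max_lt hx hy
  have hr0 : 0 ≤ r := norm_nonneg z
  have hW0 : 0 ≤ W := norm_nonneg w
  have hWm : W ≤ m * m := by
    calc W = ‖w‖ := rfl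
    _ ≤ ‖y‖ * ‖x‖ := norm_inner_le_norm (𝕜 := ℂ) y x
    _ ≤ m * m :=
      mul_le_mul (le_max_right _ _) (le_max_left _ _) (norm_nonneg _) hm0.le
  have hW1 : W < 1 := lt_of_le_of_lt hWm (by nlinarith)
  have hrm : r * (2 * m) ≤ 1 + m := (le_div_iff₀ (by positivity)).mp hz
  -- key real inequality
  have key : |r ^ 2 - 1| * W ≤ 1 - r ^ 2 * W := by
    rcases le_or_gt (r ^ 2) 1 with h | h
    · rw [abs_of_nonpos (by linarith)]
      nlinarith
    · rw [abs_of_pos (by linarith)]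
      have h4 : r ^ 2 * (4 * m ^ 2) ≤ (1 + m) ^ 2 := by
        have := mul_self_le_mul_self (by positivity : (0:ℝ) ≤ r * (2 * m)) hrm
        nlinarith [this]
      have hprod : 0 ≤ (2 * r ^ 2 - 1) * (m * m - W) :=
        mul_nonneg (by linarith) (by linarith)
      nlinarith [sq_nonneg (1 - m)]
  -- complex manipulations
  have hB : ‖(r : ℂ) ^ 2 * w - w‖ = |r ^ 2 - 1| * W := by
    have : (r : ℂ) ^ 2 * w - w = ((r : ℂ) ^ 2 - 1) * w := by ring
    rw [this, norm_mul]
    congr 1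
    rw [show ((r : ℂ) ^ 2 - 1) = ((r ^ 2 - 1 : ℝ) : ℂ) by push_cast; ring,
      Complex.norm_real, Real.norm_eq_abs]
  have hC : 1 - r ^ 2 * W ≤ ‖1 - (r : ℂ) ^ 2 * w‖ := by
    have := norm_sub_norm_le (1 : ℂ) ((r : ℂ) ^ 2 * w)
    simpa [norm_mul, norm_pow, Complex.norm_real, Real.norm_eq_abs, abs_of_nonneg hr0, pow_two, mul_assoc,
      ← hWdef] using this
  have hA : ‖1 - w‖ ≤
      ‖1 - (r : ℂ) ^ 2 * w‖ + ‖(r : ℂ) ^ 2 * w - w‖ := by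
    have : (1 - w) = (1 - (r : ℂ) ^ 2 * w) + ((r : ℂ) ^ 2 * w - w) := by ring
    rw [this]; exact norm_add_le _ _
  calc ‖1 - w‖ ≤
      ‖1 - (r : ℂ) ^ 2 * w‖ + ‖(r : ℂ) ^ 2 * w - w‖ := hA
    _ = ‖1 - (r : ℂ) ^ 2 * w‖ + |r ^ 2 - 1| * W := by rw [hB]
    _ ≤ ‖1 - (r : ℂ) ^ 2 * w‖ + (1 - r ^ 2 * W) := by linarith
    _ ≤ ‖1 - (r : ℂ) ^ 2 * w‖ + ‖1 - (r : ℂ) ^ 2 * w‖ := by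
        linarith
    _ = 2 * ‖1 - (r : ℂ) ^ 2 * w‖ := by ring
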